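/- Let β ≥ 1 and let p ∈ (0,1) satisfy p^β < β + 1 − √((β+1)² − 1). Let n ≥ 1 and let X, Y be n×n complex matrices with 0 ≤ X ≤ Y ≤ I, Tr X = p, and Tr Y = 1. Then ‖[X, Y^β]‖₁ ≤ 9·p·(1 − p^β). -/

import Mathlib

open scoped ComplexOrder

/-- The trace norm of a complex matrix: `Tr √(Aᴴ A)`, the sum of singular values. -/
noncomputable def traceNorm {n : ℕ} (A : Matrix (Fin n) (Fin n) ℂ) : ℝ :=
  (((Matrix.posSemidef_conjTranspose_mul_self A).isHermitian.eigenvectorUnitary :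
      Matrix (Fin n) (Fin n) ℂ) *
    Matrix.diagonal (fun i => ((Real.sqrt
      ((Matrix.posSemidef_conjTranspose_mul_self A).isHermitian.eigenvalues i) : ℝ) : ℂ)) *
    (star (Matrix.posSemidef_conjTranspose_mul_self A).isHermitian.eigenvectorUnitary :
      Matrix (Fin n) (Fin n) ℂ)).trace.re

/-- For a Hermitian matrix `Y = Σⱼ yⱼ |φⱼ⟩⟨φⱼ|`, the matrix `f(Y) = Σⱼ f(yⱼ) |φⱼ⟩⟨φⱼ|`
(junk value `0` if `Y` is not Hermitian). -/
noncomputable def matFun {n : ℕ} (f : ℝ → ℝ) (Y : Matrix (Fin n) (Fin n) ℂ) :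
    Matrix (Fin n) (Fin n) ℂ :=
  if hY : Y.IsHermitian then
    (hY.eigenvectorUnitary : Matrix (Fin n) (Fin n) ℂ) *
      Matrix.diagonal (fun i => (f (hY.eigenvalues i) : ℂ)) *
      (star hY.eigenvectorUnitary : Matrix (Fin n) (Fin n) ℂ)
  else 0

open Matrix
open scoped MatrixOrder

section aux

variable {m : ℕ}

lemma aux_conj_mul_self (z : ℂ) : (starRingEnd ℂ) z * z = ((‖z‖ ^ 2 : ℝ) : ℂ) := by
  rw [mul_comm, Complex.mul_conj]; norm_cast
  rw [← Complex.sq_norm]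

/-- Frobenius: trace of `Mᴴ M` is the sum of squared norms of entries. -/
lemma aux_frob (M : Matrix (Fin m) (Fin m) ℂ) :
    (Mᴴ * M).trace = ((∑ j, ∑ k, ‖M k j‖ ^ 2 : ℝ) : ℂ) := by
  rw [Matrix.trace]
  push_cast
  refine Finset.sum_congr rfl fun j _ => ?_
  rw [Matrix.diag_apply, Matrix.mul_apply]
  refine Finset.sum_congr rfl fun k _ => ?_
  rw [Matrix.conjTranspose_apply]
  rw [show star (M k j) = (starRingEnd ℂ) (M k j) from rfl, aux_conj_mul_self]
  push_cast
  ring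

lemma aux_trace_conj {V D : Matrix (Fin m) (Fin m) ℂ} (h : star V * V = 1) :
    (V * D * star V).trace = D.trace := by
  rw [Matrix.trace_mul_cycle, h, Matrix.one_mul]

lemma aux_psd_conj (V : Matrix (Fin m) (Fin m) ℂ) {d : Fin m → ℝ} (hd : ∀ i, 0 ≤ d i) :
    (V * Matrix.diagonal (fun i => (d i : ℂ)) * star V).PosSemidef := by
  have h1 : (Matrix.diagonal (fun i => (d i : ℂ))).PosSemidef := by
    rw [Matrix.posSemidef_diagonal_iff]
    intro i
    exact_mod_cast Complex.zero_le_real.mpr (hd i)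
  simpa [Matrix.star_eq_conjTranspose] using h1.mul_mul_conjTranspose_same V


lemma aux_conj_mul {V : Matrix (Fin m) (Fin m) ℂ} (h : star V * V = 1) (d e : Fin m → ℂ) :
    V * Matrix.diagonal d * star V * (V * Matrix.diagonal e * star V)
      = V * Matrix.diagonal (fun i => d i * e i) * star V := by
  have h1 : Matrix.diagonal d * Matrix.diagonal e = Matrix.diagonal (fun i => d i * e i) := by
    rw [Matrix.diagonal_mul_diagonal]
  calc V * Matrix.diagonal d * star V * (V * Matrix.diagonal e * star V)
      = V * (Matrix.diagonal d * ((star V * V) * (Matrix.diagonal e * star V))) := by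
        simp only [Matrix.mul_assoc]
    _ = V * (Matrix.diagonal d * (Matrix.diagonal e * star V)) := by rw [h, Matrix.one_mul]
    _ = V * Matrix.diagonal (fun i => d i * e i) * star V := by
        rw [← h1]; simp only [Matrix.mul_assoc]

lemma aux_psd_trace_re_nonneg {M : Matrix (Fin m) (Fin m) ℂ} (hM : M.PosSemidef) :
    0 ≤ M.trace.re := by
  exact (Complex.nonneg_iff.mp hM.trace_nonneg).1

end aux

set_option maxHeartbeats 1000000 in
theorem commutator_rpow_bound_ge_one {n : ℕ} (hn : 1 ≤ n) (β : ℝ) (hβ : 1 ≤ β)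
    (p : ℝ) (hp0 : 0 < p) (hp1 : p < 1)
    (hpβ : p ^ β < β + 1 - Real.sqrt ((β + 1) ^ 2 - 1))
    (X Y : Matrix (Fin n) (Fin n) ℂ)
    (hX : X.PosSemidef) (hXY : (Y - X).PosSemidef)
    (hYI : ((1 : Matrix (Fin n) (Fin n) ℂ) - Y).PosSemidef)
    (hTrX : X.trace = (p : ℂ)) (hTrY : Y.trace = 1) :
    traceNorm (X * matFun (fun t => t ^ β) Y - matFun (fun t => t ^ β) Y * X) ≤
      9 * p * (1 - p ^ β) := by
  classical
  -- scalar preliminaries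
  have hp7 : p ^ β ≤ 7 / 9 := by
    have h1 : β + 1 - 7 / 9 ≤ Real.sqrt ((β + 1) ^ 2 - 1) := by
      rw [Real.le_sqrt' (by linarith)]
      nlinarith
    linarith
  have hpow0 : 0 ≤ p ^ β := Real.rpow_nonneg hp0.le β
  -- Y is PSD
  have hYpsd : Y.PosSemidef := by
    have h := hXY.add hX
    simpa using h
  have hY : Y.IsHermitian := hYpsd.1
  set μ : Fin n → ℝ := hY.eigenvalues with hμdef
  have hμ0 : ∀ i, 0 ≤ μ i := fun i => hYpsd.eigenvalues_nonneg i
  set W : Matrix (Fin n) (Fin n) ℂ := (hY.eigenvectorUnitary : Matrix (Fin n) (Fin n) ℂ)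
    with hWdef
  have hWW : star W * W = 1 := Matrix.mem_unitaryGroup_iff'.mp (hY.eigenvectorUnitary).2
  have hWW' : W * star W = 1 := Matrix.mem_unitaryGroup_iff.mp (hY.eigenvectorUnitary).2
  have hYspec : Y = W * Matrix.diagonal (fun i => (μ i : ℂ)) * star W := by
    simpa [Function.comp_def] using hY.spectral_theorem
  -- eigenvalues of Y sum to 1, hence are ≤ 1
  have hμsum : ∑ i, μ i = 1 := by
    have h1 : Y.trace = ((∑ i, μ i : ℝ) : ℂ) := by
      rw [hYspec, aux_trace_conj hWW, Matrix.trace_diagonal]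
      push_cast; rfl
    rw [hTrY] at h1
    exact_mod_cast h1.symm
  have hμ1 : ∀ i, μ i ≤ 1 := by
    intro i
    rw [← hμsum]
    exact Finset.single_le_sum (fun j _ => hμ0 j) (Finset.mem_univ i)
  -- the matrix B = Y^β
  set g : Fin n → ℝ := fun i => μ i ^ β with hgdef
  have hg0 : ∀ i, 0 ≤ g i := fun i => Real.rpow_nonneg (hμ0 i) β
  have hg1 : ∀ i, g i ≤ 1 := fun i => Real.rpow_le_one (hμ0 i) (hμ1 i) (by linarith)
  set B : Matrix (Fin n) (Fin n) ℂ := matFun (fun t => t ^ β) Y with hBset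
  have hBdef : B = W * Matrix.diagonal (fun i => (g i : ℂ)) * star W := by
    rw [hBset, matFun, dif_pos hY]
  have hB : Bᴴ = B := by
    rw [hBdef]
    simp only [Matrix.conjTranspose_mul, Matrix.diagonal_conjTranspose,
      Matrix.star_eq_conjTranspose, Matrix.conjTranspose_conjTranspose]
    rw [Matrix.mul_assoc]
    congr 1
    congr 1
    funext i
    simp [Pi.star_def, Complex.conj_ofReal]
  have hBB : B * B = W * Matrix.diagonal (fun i => ((g i ^ 2 : ℝ) : ℂ)) * star W := by
    rw [hBdef, aux_conj_mul hWW]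
    have hfun : (fun i => (g i : ℂ) * (g i : ℂ)) = (fun i => ((g i ^ 2 : ℝ) : ℂ)) := by
      funext i; push_cast; ring
    rw [hfun]
  have h1BB : ((1 : Matrix (Fin n) (Fin n) ℂ) - B * B).PosSemidef := by
    have he : (1 : Matrix (Fin n) (Fin n) ℂ) - B * B
        = W * Matrix.diagonal (fun i => ((1 - g i ^ 2 : ℝ) : ℂ)) * star W := by
      rw [hBB]
      have h1 : (1 : Matrix (Fin n) (Fin n) ℂ) = W * 1 * star W := by
        rw [Matrix.mul_one, hWW']
      rw [h1]
      rw [← Matrix.sub_mul, ← Matrix.mul_sub]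
      congr 2
      rw [← Matrix.diagonal_one, Matrix.diagonal_sub]
      congr 1
      funext i
      push_cast
      ring
    rw [he]
    exact aux_psd_conj W (fun i => by nlinarith [hg0 i, hg1 i])
  -- the commutator and its Hermitian version
  set A : Matrix (Fin n) (Fin n) ℂ := X * B - B * X with hAdef
  have hAstar : Aᴴ = -A := by
    rw [hAdef]
    simp [Matrix.conjTranspose_sub, Matrix.conjTranspose_mul, hX.1.eq, hB]
  set H : Matrix (Fin n) (Fin n) ℂ := Complex.I • A with hHdef
  have hH : H.IsHermitian := by
    show Hᴴ = H
    rw [hHdef, Matrix.conjTranspose_smul, hAstar]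
    simp [Complex.star_def, Complex.conj_I]
  set lam : Fin n → ℝ := hH.eigenvalues with hlamdef
  set V : Matrix (Fin n) (Fin n) ℂ := (hH.eigenvectorUnitary : Matrix (Fin n) (Fin n) ℂ)
    with hVdef
  have hVV : star V * V = 1 := Matrix.mem_unitaryGroup_iff'.mp (hH.eigenvectorUnitary).2
  have hVV' : V * star V = 1 := Matrix.mem_unitaryGroup_iff.mp (hH.eigenvectorUnitary).2
  have hHspec : H = V * Matrix.diagonal (fun i => (lam i : ℂ)) * star V := by
    simpa [Function.comp_def] using hH.spectral_theorem
  have hHdiag : star V * H * V = Matrix.diagonal (fun i => (lam i : ℂ)) := by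
    simpa [Function.comp_def, Matrix.mul_assoc] using hH.conjStarAlgAut_star_eigenvectorUnitary
  -- identification of the trace norm with ∑ |lam i|
  set S : Matrix (Fin n) (Fin n) ℂ := V * Matrix.diagonal (fun i => ((|lam i| : ℝ) : ℂ)) * star V
    with hSdef
  have hSpsd : S.PosSemidef := aux_psd_conj V (fun i => abs_nonneg _)
  have hHH : H * H = Aᴴ * A := by
    rw [hAstar, hHdef, Matrix.smul_mul, Matrix.mul_smul, smul_smul, Complex.I_mul_I,
      Matrix.neg_mul, neg_smul, one_smul]
  have hS2 : S ^ 2 = Aᴴ * A := by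
    rw [← hHH, pow_two, hSdef, aux_conj_mul hVV]
    conv_rhs => rw [hHspec]
    rw [aux_conj_mul hVV]
    have hfun : (fun i => ((|lam i| : ℝ) : ℂ) * ((|lam i| : ℝ) : ℂ))
        = (fun i => ((lam i : ℝ) : ℂ) * ((lam i : ℝ) : ℂ)) := by
      funext i; exact_mod_cast abs_mul_abs_self (lam i)
    rw [hfun]
  have htrS : traceNorm A = ∑ i, |lam i| := by
    have hM := Matrix.posSemidef_conjTranspose_mul_self A
    set e : Fin n → ℝ := hM.isHermitian.eigenvalues with hedef
    set U : Matrix (Fin n) (Fin n) ℂ := (hM.isHermitian.eigenvectorUnitary :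
      Matrix (Fin n) (Fin n) ℂ) with hUdef
    have hUU : star U * U = 1 :=
      Matrix.mem_unitaryGroup_iff'.mp (hM.isHermitian.eigenvectorUnitary).2
    set T : Matrix (Fin n) (Fin n) ℂ :=
      U * Matrix.diagonal (fun i => ((Real.sqrt (e i) : ℝ) : ℂ)) * star U with hTdef
    have hTpsd : T.PosSemidef := aux_psd_conj U (fun i => Real.sqrt_nonneg _)
    have hMspec : Aᴴ * A = U * Matrix.diagonal (fun i => (e i : ℂ)) * star U := by
      simpa [Function.comp_def] using hM.isHermitian.spectral_theorem
    have hT2 : T * T = Aᴴ * A := by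
      have hfun : (fun i => ((Real.sqrt (e i) : ℝ) : ℂ) * ((Real.sqrt (e i) : ℝ) : ℂ))
          = (fun i => ((e i : ℝ) : ℂ)) := by
        funext i; exact_mod_cast Real.mul_self_sqrt (hM.eigenvalues_nonneg i)
      rw [hTdef, aux_conj_mul hUU, hfun, hMspec]
    have hST : S = T := by
      have h1 := (CFC.sqrt_eq_iff (Aᴴ * A) S hM.nonneg hSpsd.nonneg).mpr
        (by rw [← pow_two]; exact hS2)
      have h2 := (CFC.sqrt_eq_iff (Aᴴ * A) T hM.nonneg hTpsd.nonneg).mpr hT2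
      rw [← h1, h2]
    have hTr : traceNorm A = T.trace.re := rfl
    rw [hTr, ← hST, hSdef, aux_trace_conj hVV, Matrix.trace_diagonal]
    rw [← Complex.ofReal_sum]
    exact Complex.ofReal_re _
  -- the key bound ∑ |lam i| ≤ 2 p
  set R : Matrix (Fin n) (Fin n) ℂ := CFC.sqrt X with hRdef
  have hRR : R * R = X := CFC.sqrt_mul_sqrt_self X hX.nonneg
  have hRH : Rᴴ = R := (CFC.sqrt_nonneg X).posSemidef.1
  set P : Matrix (Fin n) (Fin n) ℂ := R * V with hPdef
  set Q : Matrix (Fin n) (Fin n) ℂ := R * B * V with hQdef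
  set G : Matrix (Fin n) (Fin n) ℂ := star V * (X * B) * V with hGdef
  have hGPQ : G = Pᴴ * Q := by
    rw [hGdef, hPdef, hQdef, Matrix.conjTranspose_mul, hRH, ← hRR,
      Matrix.star_eq_conjTranspose]
    simp only [Matrix.mul_assoc]
  have hlam : ∀ j, (lam j : ℂ) = Complex.I * (G j j - (starRingEnd ℂ) (G j j)) := by
    intro j
    have h1 : (lam j : ℂ) = (star V * H * V) j j := by
      rw [hHdiag, Matrix.diagonal_apply_eq]
    have h2 : star V * H * V = Complex.I • (G - Gᴴ) := by
      have hGH : Gᴴ = star V * (B * X) * V := by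
        rw [hGdef]
        simp only [Matrix.conjTranspose_mul, Matrix.star_eq_conjTranspose,
          Matrix.conjTranspose_conjTranspose, hX.1.eq, hB]
        noncomm_ring
      rw [hHdef, Matrix.mul_smul, Matrix.smul_mul]
      congr 1
      rw [hGH, hGdef, hAdef]
      simp only [Matrix.mul_sub, Matrix.sub_mul]
    rw [h1, h2]
    simp [Matrix.sub_apply, Matrix.conjTranspose_apply, Matrix.smul_apply]
  have hlamabs : ∀ j, |lam j| ≤ 2 * ‖G j j‖ := by
    intro j
    have h := hlam j
    have him : (lam j : ℂ) = ((-2 * (G j j).im : ℝ) : ℂ) := by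
      rw [h, Complex.sub_conj]
      push_cast
      linear_combination (2 * ((G j j).im : ℂ)) * Complex.I_mul_I
    have him' : lam j = -2 * (G j j).im := by exact_mod_cast him
    have habs : |(G j j).im| ≤ ‖G j j‖ := Complex.abs_im_le_norm _
    rw [him', abs_mul, abs_neg, abs_two]
    exact mul_le_mul_of_nonneg_left habs (by norm_num)
  have hGentry : ∀ j, ‖G j j‖ ≤ ∑ k, ‖P k j‖ * ‖Q k j‖ := by
    intro j
    rw [hGPQ, Matrix.mul_apply]
    refine (norm_sum_le _ _).trans ?_
    refine Finset.sum_le_sum fun k _ => ?_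
    rw [Matrix.conjTranspose_apply]
    rw [norm_mul]
    gcongr
    rw [norm_star]
  -- Frobenius norms
  have hPfr : ∑ j, ∑ k, ‖P k j‖ ^ 2 = p := by
    have h1 : (Pᴴ * P).trace = (p : ℂ) := by
      have e : Pᴴ * P = star V * X * V := by
        rw [hPdef, Matrix.conjTranspose_mul, hRH, ← hRR, Matrix.star_eq_conjTranspose]
        simp only [Matrix.mul_assoc]
      rw [e, Matrix.trace_mul_cycle, hVV', Matrix.one_mul, hTrX]
    rw [aux_frob] at h1
    exact_mod_cast h1
  have hQfr : ∑ j, ∑ k, ‖Q k j‖ ^ 2 ≤ p := by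
    have h1 : (Qᴴ * Q).trace = (B * X * B).trace := by
      have e : Qᴴ * Q = star V * (B * X * B) * V := by
        rw [hQdef]
        simp only [Matrix.conjTranspose_mul, hRH, hB, Matrix.star_eq_conjTranspose]
        rw [← hRR]
        simp only [Matrix.mul_assoc]
      rw [e, Matrix.trace_mul_cycle, hVV', Matrix.one_mul]
    have h2 : (B * X * B).trace = (R * (B * B) * R).trace := by
      rw [← hRR]
      rw [show B * (R * R) * B = B * R * (R * B) by simp only [Matrix.mul_assoc]]
      rw [Matrix.trace_mul_comm]
      congr 1
      simp only [Matrix.mul_assoc]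
    have h3 : 0 ≤ (X.trace - (B * X * B).trace).re := by
      have he : X - R * (B * B) * R = R * (1 - B * B) * R := by
        rw [Matrix.mul_sub, Matrix.sub_mul, Matrix.mul_one, hRR]
      have hpsd : (R * (1 - B * B) * R).PosSemidef := by
        have := h1BB.mul_mul_conjTranspose_same R
        rwa [hRH] at this
      have h4 : 0 ≤ (R * (1 - B * B) * R).trace.re := aux_psd_trace_re_nonneg hpsd
      rw [← he, Matrix.trace_sub] at h4
      rw [h2]
      exact h4
    have h5 : (Qᴴ * Q).trace = ((∑ j, ∑ k, ‖Q k j‖ ^ 2 : ℝ) : ℂ) := aux_frob Q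
    have h6 : ((B * X * B).trace).re = ∑ j, ∑ k, ‖Q k j‖ ^ 2 := by
      rw [← h1, h5, Complex.ofReal_re]
    have h7 : (X.trace).re = p := by rw [hTrX, Complex.ofReal_re]
    rw [Complex.sub_re, h7, h6] at h3
    linarith
  -- Cauchy–Schwarz
  have hCS : ∑ j, |lam j| ≤ 2 * p := by
    have h1 : ∑ j, |lam j| ≤ 2 * ∑ j, ∑ k, ‖P k j‖ * ‖Q k j‖ := by
      rw [Finset.mul_sum]
      refine Finset.sum_le_sum fun j _ => ?_
      calc |lam j| ≤ 2 * ‖G j j‖ := hlamabs j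
        _ ≤ 2 * ∑ k, ‖P k j‖ * ‖Q k j‖ := by
            have := hGentry j
            linarith
    have h2 : ∑ j, ∑ k, ‖P k j‖ * ‖Q k j‖ ≤
        Real.sqrt (∑ j, ∑ k, ‖P k j‖ ^ 2) * Real.sqrt (∑ j, ∑ k, ‖Q k j‖ ^ 2) := by
      have h3 := Real.sum_mul_le_sqrt_mul_sqrt (Finset.univ : Finset (Fin n × Fin n))
        (fun x => ‖P x.2 x.1‖) (fun x => ‖Q x.2 x.1‖)
      simpa [Fintype.sum_prod_type] using h3
    have h4 : Real.sqrt (∑ j, ∑ k, ‖P k j‖ ^ 2) = Real.sqrt p := by rw [hPfr]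
    have h5 : Real.sqrt (∑ j, ∑ k, ‖Q k j‖ ^ 2) ≤ Real.sqrt p := Real.sqrt_le_sqrt hQfr
    have h6 : Real.sqrt p * Real.sqrt p = p := Real.mul_self_sqrt hp0.le
    rw [h4] at h2
    have h8 : Real.sqrt p * Real.sqrt (∑ j, ∑ k, ‖Q k j‖ ^ 2) ≤ Real.sqrt p * Real.sqrt p :=
      mul_le_mul_of_nonneg_left h5 (Real.sqrt_nonneg _)
    linarith
  -- conclude
  rw [htrS]
  have hfin : 2 * p ≤ 9 * p * (1 - p ^ β) := by
    nlinarith [mul_nonneg hp0.le (by linarith : (0:ℝ) ≤ 7 - 9 * p ^ β)]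
  linarith [hCS]
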